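/- Let θ ∈ (0, π/2) and let x₀, x₁, x₂, x₃ be affinely independent points of ℝ³ (a nondegenerate tetrahedron) satisfying the minimum angle condition with constant θ: (i) for all pairwise distinct indices i, j, k, the face angle ∠(xᵢ xⱼ xₖ) lies in [θ, π − θ]; (ii) for all distinct indices i, j, the distance from xᵢ to the affine span of the other three vertices is at least sin θ · dist(xᵢ, xⱼ). Let B lie in the open segment (x₀, x₁), C in the open segment (x₀, x₂), and D in the open segment (x₀, x₃) (so that B, C, D are the vertices of a triangular planar cross-section of the tetrahedron cutting off the vertex x₀). Then each of the three inner angles of the triangle BCD, namely ∠(C B D), ∠(B C D) and ∠(B D C), is at most φ₀, where φ₀ is the unique φ ∈ (π/2, π) satisfying 4·sin φ/sin θ + 2π − 2φ = θ. In particular each inner angle is at most π − φ_min with φ_min := π − φ₀ > 0 depending only on θ. -/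

import Mathlib

open Real EuclideanGeometry RealInnerProductSpace

set_option maxHeartbeats 1000000

open Real EuclideanGeometry InnerProductGeometry RealInnerProductSpace

variable {V : Type*} [NormedAddCommGroup V] [InnerProductSpace ℝ V]

/-- Decomposition inequality with respect to a unit vector. -/
lemma inner_decomp {n : V} (hn : ‖n‖ = 1) (u v : V) :
    ⟪u, n⟫ * ⟪v, n⟫ -
      Real.sqrt ((‖u‖ ^ 2 - ⟪u, n⟫ ^ 2) * (‖v‖ ^ 2 - ⟪v, n⟫ ^ 2)) ≤ ⟪u, v⟫ := by
  have hnn : ⟪n, n⟫ = 1 := by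
    rw [real_inner_self_eq_norm_sq, hn]; norm_num
  set t := ⟪u, n⟫ with ht_def
  set r := ⟪v, n⟫ with hr_def
  have h1 : ⟪u - t • n, v - r • n⟫ = ⟪u, v⟫ - t * r := by
    simp only [inner_sub_left, inner_sub_right, real_inner_smul_left, real_inner_smul_right, hnn]
    try rw [show (⟪n, v⟫ : ℝ) = r from real_inner_comm v n ▸ hr_def.symm]
    try rw [show (⟪n, u⟫ : ℝ) = t from real_inner_comm u n ▸ ht_def.symm]
    ring
  have h2 : ‖u - t • n‖ ^ 2 = ‖u‖ ^ 2 - t ^ 2 := by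
    rw [← real_inner_self_eq_norm_sq, ← real_inner_self_eq_norm_sq]
    simp only [inner_sub_left, inner_sub_right, real_inner_smul_left, real_inner_smul_right, hnn]
    try rw [show (⟪n, v⟫ : ℝ) = r from real_inner_comm v n ▸ hr_def.symm]
    try rw [show (⟪n, u⟫ : ℝ) = t from real_inner_comm u n ▸ ht_def.symm]
    ring
  have h3 : ‖v - r • n‖ ^ 2 = ‖v‖ ^ 2 - r ^ 2 := by
    rw [← real_inner_self_eq_norm_sq, ← real_inner_self_eq_norm_sq]
    simp only [inner_sub_left, inner_sub_right, real_inner_smul_left, real_inner_smul_right, hnn]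
    try rw [show (⟪n, v⟫ : ℝ) = r from real_inner_comm v n ▸ hr_def.symm]
    try rw [show (⟪n, u⟫ : ℝ) = t from real_inner_comm u n ▸ ht_def.symm]
    ring
  have cs : -(‖u - t • n‖ * ‖v - r • n‖) ≤ ⟪u - t • n, v - r • n⟫ :=
    neg_le_of_abs_le (abs_real_inner_le_norm _ _)
  have hprod : ‖u - t • n‖ * ‖v - r • n‖ =
      Real.sqrt ((‖u‖ ^ 2 - t ^ 2) * (‖v‖ ^ 2 - r ^ 2)) := by
    rw [← h2, ← h3, Real.sqrt_mul (sq_nonneg _), Real.sqrt_sq (norm_nonneg _),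
      Real.sqrt_sq (norm_nonneg _)]
  rw [h1] at cs
  rw [hprod] at cs
  linarith

/-- If the cosine bound holds then the angle bound holds. -/
lemma angle_le_of_cos_le {u v : V} (hu : u ≠ 0) (hv : v ≠ 0) {ψ : ℝ} (h0 : 0 ≤ ψ) (hπ : ψ ≤ π)
    (h : Real.cos ψ * (‖u‖ * ‖v‖) ≤ ⟪u, v⟫) : InnerProductGeometry.angle u v ≤ ψ := by
  have hc : Real.cos ψ ≤ Real.cos (InnerProductGeometry.angle u v) := by
    rw [InnerProductGeometry.cos_angle,
      le_div_iff₀ (mul_pos (norm_pos_iff.2 hu) (norm_pos_iff.2 hv))]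
    exact h
  have e1 : Real.arccos (Real.cos (InnerProductGeometry.angle u v))
      = InnerProductGeometry.angle u v :=
    Real.arccos_cos (InnerProductGeometry.angle_nonneg _ _) (InnerProductGeometry.angle_le_pi _ _)
  have e2 : Real.arccos (Real.cos ψ) = ψ := Real.arccos_cos h0 hπ
  have e3 : Real.arccos (Real.cos (InnerProductGeometry.angle u v))
      ≤ Real.arccos (Real.cos ψ) := by
    rw [Real.arccos_eq_pi_div_two_sub_arcsin, Real.arccos_eq_pi_div_two_sub_arcsin]
    have := Real.monotone_arcsin hc
    linarith
  linarith

/-- Triangle inequality for angles between vectors. -/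
lemma my_angle_triangle (x : V) {y : V} (z : V) (hy : y ≠ 0) :
    InnerProductGeometry.angle x z ≤
      InnerProductGeometry.angle x y + InnerProductGeometry.angle y z := by
  rcases eq_or_ne x 0 with rfl | hx
  · simp only [InnerProductGeometry.angle_zero_left]
    linarith [InnerProductGeometry.angle_nonneg y z]
  rcases eq_or_ne z 0 with rfl | hz
  · simp only [InnerProductGeometry.angle_zero_right]
    linarith [InnerProductGeometry.angle_nonneg x y]
  by_cases hab : InnerProductGeometry.angle x y + InnerProductGeometry.angle y z ≤ π
  swap
  · exact le_trans (InnerProductGeometry.angle_le_pi x z) (le_of_lt (not_le.1 hab))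
  have hy' : (0 : ℝ) < ‖y‖ := norm_pos_iff.2 hy
  have hny : (0 : ℝ) < ‖y‖⁻¹ := by positivity
  set n := ‖y‖⁻¹ • y with hn_def
  have hn : ‖n‖ = 1 := by
    rw [hn_def, norm_smul, Real.norm_eq_abs, abs_of_pos hny, inv_mul_cancel₀ (ne_of_gt hy')]
  set a := InnerProductGeometry.angle x y with ha_def
  set b := InnerProductGeometry.angle y z with hb_def
  have ha : InnerProductGeometry.angle x n = a :=
    InnerProductGeometry.angle_smul_right_of_pos _ _ hny
  have hb : InnerProductGeometry.angle n z = b :=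
    InnerProductGeometry.angle_smul_left_of_pos _ _ hny
  have hxn : ⟪x, n⟫ = Real.cos a * ‖x‖ := by
    have h := InnerProductGeometry.cos_angle_mul_norm_mul_norm x n
    rw [ha, hn, mul_one] at h
    linarith
  have hzn : ⟪z, n⟫ = Real.cos b * ‖z‖ := by
    have h := InnerProductGeometry.cos_angle_mul_norm_mul_norm n z
    rw [hb, hn, one_mul] at h
    rw [real_inner_comm]
    linarith
  have ha0 : 0 ≤ a := InnerProductGeometry.angle_nonneg _ _
  have haπ : a ≤ π := InnerProductGeometry.angle_le_pi _ _
  have hb0 : 0 ≤ b := InnerProductGeometry.angle_nonneg _ _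
  have hbπ : b ≤ π := InnerProductGeometry.angle_le_pi _ _
  have hsa : 0 ≤ Real.sin a := Real.sin_nonneg_of_nonneg_of_le_pi ha0 haπ
  have hsb : 0 ≤ Real.sin b := Real.sin_nonneg_of_nonneg_of_le_pi hb0 hbπ
  apply angle_le_of_cos_le hx hz (by linarith) hab
  have hd := inner_decomp hn x z
  rw [hxn, hzn] at hd
  have e1 : ‖x‖ ^ 2 - (Real.cos a * ‖x‖) ^ 2 = (Real.sin a * ‖x‖) ^ 2 := by
    have := Real.sin_sq_add_cos_sq a
    nlinarith
  have e2 : ‖z‖ ^ 2 - (Real.cos b * ‖z‖) ^ 2 = (Real.sin b * ‖z‖) ^ 2 := by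
    have := Real.sin_sq_add_cos_sq b
    nlinarith
  rw [e1, e2] at hd
  have e3 : Real.sqrt ((Real.sin a * ‖x‖) ^ 2 * (Real.sin b * ‖z‖) ^ 2) =
      Real.sin a * ‖x‖ * (Real.sin b * ‖z‖) := by
    rw [← mul_pow, Real.sqrt_sq (by positivity)]
  rw [e3] at hd
  rw [Real.cos_add]
  nlinarith [hd]

/-- Sine is at least `sin t` on `[t, π - t]`. -/
lemma sin_le_sin_mem {t δ : ℝ} (ht0 : 0 ≤ t) (htπ : t ≤ π / 2) (h1 : t ≤ δ) (h2 : δ ≤ π - t) :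
    Real.sin t ≤ Real.sin δ := by
  have mono := Real.strictMonoOn_sin.monotoneOn
  rcases le_total δ (π / 2) with h | h
  · exact mono ⟨by linarith, htπ⟩ ⟨by linarith, h⟩ h1
  · rw [← Real.sin_pi_sub δ]
    exact mono ⟨by linarith, htπ⟩ ⟨by linarith, by linarith⟩ (by linarith)

/-- Two vectors whose components along a unit vector are sufficiently negative make an
angle at most `π - s`. -/
lemma angle_le_comp {u v n : V} (hu : u ≠ 0) (hv : v ≠ 0) (hn : ‖n‖ = 1) {s : ℝ}
    (hs0 : 0 ≤ s) (hsπ : s ≤ π / 2) (h1 : ⟪u, n⟫ ≤ -(Real.sin s * ‖u‖))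
    (h2 : ⟪v, n⟫ ≤ 0) : InnerProductGeometry.angle u v ≤ π - s := by
  have pi_pos := Real.pi_pos
  apply angle_le_of_cos_le hu hv (by linarith) (by linarith)
  rw [Real.cos_pi_sub]
  have hd := inner_decomp hn u v
  set t := ⟪u, n⟫
  set r := ⟪v, n⟫
  have hsin : 0 ≤ Real.sin s := Real.sin_nonneg_of_nonneg_of_le_pi hs0 (by linarith)
  have hcos : 0 ≤ Real.cos s := Real.cos_nonneg_of_mem_Icc ⟨by linarith, hsπ⟩
  have ht0 : t ≤ 0 := le_trans h1 (by nlinarith [norm_nonneg u, mul_nonneg hsin (norm_nonneg u)])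
  have htr : 0 ≤ t * r := by nlinarith [ht0, h2]
  have ht2 : (Real.sin s * ‖u‖) ^ 2 ≤ t ^ 2 := by
    nlinarith [mul_nonneg hsin (norm_nonneg u), sq_nonneg (t + Real.sin s * ‖u‖)]
  have hcs_u : |t| ≤ ‖u‖ := by
    have := abs_real_inner_le_norm u n
    rwa [hn, mul_one] at this
  have hcs_v : |r| ≤ ‖v‖ := by
    have := abs_real_inner_le_norm v n
    rwa [hn, mul_one] at this
  have hu2 : 0 ≤ ‖u‖ ^ 2 - t ^ 2 := by nlinarith [abs_nonneg t, sq_abs t]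
  have hr2 : 0 ≤ ‖v‖ ^ 2 - r ^ 2 := by nlinarith [abs_nonneg r, sq_abs r]
  have hu2' : ‖u‖ ^ 2 - t ^ 2 ≤ ‖u‖ ^ 2 * Real.cos s ^ 2 := by
    have := Real.sin_sq_add_cos_sq s
    nlinarith
  have hsq : Real.sqrt ((‖u‖ ^ 2 - t ^ 2) * (‖v‖ ^ 2 - r ^ 2)) ≤ Real.cos s * ‖u‖ * ‖v‖ := by
    calc Real.sqrt ((‖u‖ ^ 2 - t ^ 2) * (‖v‖ ^ 2 - r ^ 2))
        ≤ Real.sqrt ((‖u‖ ^ 2 * Real.cos s ^ 2) * ‖v‖ ^ 2) := by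
          apply Real.sqrt_le_sqrt
          have : ‖v‖ ^ 2 - r ^ 2 ≤ ‖v‖ ^ 2 := by nlinarith [sq_nonneg r]
          nlinarith [hu2, hr2, hu2']
      _ = Real.cos s * ‖u‖ * ‖v‖ := by
          rw [show ‖u‖ ^ 2 * Real.cos s ^ 2 * ‖v‖ ^ 2 = (Real.cos s * ‖u‖ * ‖v‖) ^ 2 by ring,
            Real.sqrt_sq (by positivity)]
  linarith

/-- The angle `∠(c f - b e, f)` in the triangle `0, b e, c f` is at most `π` minus the
angle at the origin. -/
lemma delta_le_pi_sub {e f : V} {b c θ : ℝ} (hb : 0 < b) (hc : 0 < c)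
    (he : e ≠ 0) (hf : f ≠ 0) (hang : θ ≤ InnerProductGeometry.angle f e) :
    InnerProductGeometry.angle (c • f - b • e) f ≤ π - θ := by
  have h2 : b • e ≠ (0 : V) := smul_ne_zero (ne_of_gt hb) he
  have h3 : c • f ≠ (0 : V) := smul_ne_zero (ne_of_gt hc) hf
  have hsum := EuclideanGeometry.angle_add_angle_add_angle_eq_pi
    (p₁ := (0 : V)) (p₂ := b • e) (c • f) h2
  have e1 : ∠ (b • e) (c • f) (0 : V) = InnerProductGeometry.angle (c • f - b • e) f := by
    show InnerProductGeometry.angle (b • e -ᵥ c • f) ((0 : V) -ᵥ c • f) = _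
    rw [vsub_eq_sub, vsub_eq_sub, zero_sub, show b • e - c • f = -(c • f - b • e) by abel,
      InnerProductGeometry.angle_neg_neg]
    exact InnerProductGeometry.angle_smul_right_of_pos _ _ hc
  have e2 : ∠ (c • f) (0 : V) (b • e) = InnerProductGeometry.angle f e := by
    show InnerProductGeometry.angle (c • f -ᵥ (0 : V)) (b • e -ᵥ (0 : V)) = _
    rw [vsub_eq_sub, vsub_eq_sub, sub_zero, sub_zero,
      InnerProductGeometry.angle_smul_left_of_pos _ _ hc,
      InnerProductGeometry.angle_smul_right_of_pos _ _ hb]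
  have hnn := EuclideanGeometry.angle_nonneg (0 : V) (b • e) (c • f)
  rw [e1, e2] at hsum
  linarith

/-- Sine of the angle at the cross-section point bound. -/
lemma sin_delta_bound {e₁ f : V} (hf : f ≠ 0) {b c : ℝ} (hb : 0 < b) {u : V}
    (hu_def : u = c • f - b • e₁) (hu : u ≠ 0) :
    Real.sin (InnerProductGeometry.angle u f) * ‖u‖ ≤ b * ‖e₁‖ := by
  have h := InnerProductGeometry.sin_angle_mul_norm_mul_norm u f
  have harg : (⟪u, u⟫ : ℝ) * ⟪f, f⟫ - ⟪u, f⟫ * ⟪u, f⟫ =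
      b ^ 2 * (‖e₁‖ ^ 2 * ‖f‖ ^ 2 - ⟪e₁, f⟫ ^ 2) := by
    rw [hu_def]
    simp only [inner_sub_left, inner_sub_right, real_inner_smul_left, real_inner_smul_right,
      real_inner_comm f e₁]
    simp only [real_inner_self_eq_norm_sq]
    ring
  rw [harg] at h
  have hbound : Real.sqrt (b ^ 2 * (‖e₁‖ ^ 2 * ‖f‖ ^ 2 - ⟪e₁, f⟫ ^ 2)) ≤ b * (‖e₁‖ * ‖f‖) := by
    calc Real.sqrt (b ^ 2 * (‖e₁‖ ^ 2 * ‖f‖ ^ 2 - ⟪e₁, f⟫ ^ 2))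
        ≤ Real.sqrt (b ^ 2 * (‖e₁‖ ^ 2 * ‖f‖ ^ 2)) := by
          apply Real.sqrt_le_sqrt
          nlinarith [sq_nonneg (⟪e₁, f⟫ : ℝ), sq_nonneg b]
      _ = b * (‖e₁‖ * ‖f‖) := by
          rw [show b ^ 2 * (‖e₁‖ ^ 2 * ‖f‖ ^ 2) = (b * (‖e₁‖ * ‖f‖)) ^ 2 by ring,
            Real.sqrt_sq (by positivity)]
  have hf' : (0 : ℝ) < ‖f‖ := norm_pos_iff.2 hf
  have hle := le_trans (le_of_eq h) hbound
  nlinarith [hle, hf']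

/-- Main per-vertex bound for the cross-section triangle. -/
lemma vertex_bound {V : Type*} [NormedAddCommGroup V] [InnerProductSpace ℝ V]
    [FiniteDimensional ℝ V]
    {θ s : ℝ} (hθ0 : 0 < θ) (hθ1 : θ < π / 2) (hs0 : 0 < s) (hs1 : 2 * s < θ)
    (hkey : Real.sin s ≤ Real.sin θ * Real.sin ((θ - s) / 2))
    {e₁ e₂ e₃ : V} (he₁ : e₁ ≠ 0) (he₂ : e₂ ≠ 0) (he₃ : e₃ ≠ 0)
    (h23 : InnerProductGeometry.angle e₂ e₃ ≤ π - θ)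
    (h12 : θ ≤ InnerProductGeometry.angle e₂ e₁)
    (h13 : θ ≤ InnerProductGeometry.angle e₃ e₁)
    (hplane : ∀ w ∈ Submodule.span ℝ ({e₂, e₃} : Set V), Real.sin θ * ‖e₁‖ ≤ ‖e₁ - w‖)
    {b c d : ℝ} (hb : 0 < b) (hc : 0 < c) (hd : 0 < d) :
    InnerProductGeometry.angle (c • e₂ - b • e₁) (d • e₃ - b • e₁) ≤ π - s := by
  have pi_pos := Real.pi_pos
  set t := (θ - s) / 2 with ht_def
  have ht0 : 0 < t := by simp only [ht_def]; linarith
  have htθ : t < θ := by simp only [ht_def]; linarith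
  have htπ : t < π / 2 := by linarith
  have hsθ2 : s < π / 2 := by linarith
  have hsinθ : 0 < Real.sin θ := Real.sin_pos_of_pos_of_lt_pi hθ0 (by linarith)
  -- the orthogonal direction to the plane spanned by e₂, e₃
  set K := Submodule.span ℝ ({e₂, e₃} : Set V) with hK_def
  set m := e₁ - (K.orthogonalProjectionOnto e₁ : V) with hm_def
  have hm2 : (⟪m, e₂⟫ : ℝ) = 0 :=
    Submodule.starProjection_inner_eq_zero (K := K) e₁ e₂ (Submodule.subset_span (by simp))
  have hm3 : (⟪m, e₃⟫ : ℝ) = 0 :=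
    Submodule.starProjection_inner_eq_zero (K := K) e₁ e₃ (Submodule.subset_span (by simp))
  have hm_norm : Real.sin θ * ‖e₁‖ ≤ ‖m‖ := hplane _ (K.orthogonalProjectionOnto e₁).2
  have he₁' : (0 : ℝ) < ‖e₁‖ := norm_pos_iff.2 he₁
  have hm_pos : (0 : ℝ) < ‖m‖ := lt_of_lt_of_le (by positivity) hm_norm
  have hm_e1 : (⟪m, e₁⟫ : ℝ) = ‖m‖ ^ 2 := by
    have hproj : (⟪m, (K.orthogonalProjectionOnto e₁ : V)⟫ : ℝ) = 0 :=
      Submodule.starProjection_inner_eq_zero (K := K) e₁ _ (K.orthogonalProjectionOnto e₁).2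
    have : e₁ = m + (K.orthogonalProjectionOnto e₁ : V) := by rw [hm_def]; abel
    rw [this, inner_add_right, hproj, real_inner_self_eq_norm_sq]
    ring
  set n := ‖m‖⁻¹ • m with hn_def
  have hn : ‖n‖ = 1 := by
    rw [hn_def, norm_smul, Real.norm_eq_abs, abs_of_pos (by positivity),
      inv_mul_cancel₀ (ne_of_gt hm_pos)]
  set u := c • e₂ - b • e₁ with hu_def
  set v := d • e₃ - b • e₁ with hv_def
  have hm2' : (⟪e₂, m⟫ : ℝ) = 0 := by rw [real_inner_comm]; exact hm2
  have hm3' : (⟪e₃, m⟫ : ℝ) = 0 := by rw [real_inner_comm]; exact hm3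
  have hm_e1' : (⟪e₁, m⟫ : ℝ) = ‖m‖ ^ 2 := by rw [real_inner_comm]; exact hm_e1
  have hun : (⟪u, n⟫ : ℝ) = -(b * ‖m‖) := by
    rw [hu_def, hn_def, real_inner_smul_right, inner_sub_left, real_inner_smul_left,
      real_inner_smul_left, hm2', hm_e1']
    field_simp
    ring
  have hvn : (⟪v, n⟫ : ℝ) = -(b * ‖m‖) := by
    rw [hv_def, hn_def, real_inner_smul_right, inner_sub_left, real_inner_smul_left,
      real_inner_smul_left, hm3', hm_e1']
    field_simp
    ring
  have hbm : (0 : ℝ) < b * ‖m‖ := by positivity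
  have hu0 : u ≠ 0 := by
    intro h
    rw [h, inner_zero_left] at hun
    linarith
  have hv0 : v ≠ 0 := by
    intro h
    rw [h, inner_zero_left] at hvn
    linarith
  -- the two "boundary" angles
  set δ₁ := InnerProductGeometry.angle u e₂ with hδ₁_def
  set δ₂ := InnerProductGeometry.angle v e₃ with hδ₂_def
  have hδ₁_le : δ₁ ≤ π - θ := delta_le_pi_sub hb hc he₁ he₂ h12
  have hδ₂_le : δ₂ ≤ π - θ := delta_le_pi_sub hb hd he₁ he₃ h13
  -- the "large boundary angle" case
  have case2 : ∀ w w' : V, w ≠ 0 → w' ≠ 0 → (⟪w, n⟫ : ℝ) = -(b * ‖m‖) →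
      (⟪w', n⟫ : ℝ) = -(b * ‖m‖) → Real.sin s * ‖w‖ ≤ b * ‖m‖ →
      InnerProductGeometry.angle w w' ≤ π - s := by
    intro w w' h1 h2 h3 h4 h5
    apply angle_le_comp h1 h2 hn hs0.le hsθ2.le
    · rw [h3]; linarith
    · rw [h4]; linarith
  have hsint : 0 < Real.sin t := Real.sin_pos_of_pos_of_lt_pi ht0 (by linarith)
  -- key chain for a vector with a large boundary angle
  have chain : ∀ w f : V, f ≠ 0 → w ≠ 0 → Real.sin (InnerProductGeometry.angle w f) * ‖w‖ ≤ b * ‖e₁‖ →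
      t < InnerProductGeometry.angle w f → InnerProductGeometry.angle w f ≤ π - θ →
      Real.sin s * ‖w‖ ≤ b * ‖m‖ := by
    intro w f hf hw hsin_bound hlt hle
    have h1 : Real.sin t ≤ Real.sin (InnerProductGeometry.angle w f) :=
      sin_le_sin_mem ht0.le htπ.le hlt.le (by linarith)
    have h2 : Real.sin s ≤ Real.sin θ * Real.sin t := by
      refine le_trans hkey ?_
      have : Real.sin ((θ - s) / 2) = Real.sin t := by rw [ht_def]
      rw [this]
    have h3 : Real.sin t * ‖w‖ ≤ Real.sin (InnerProductGeometry.angle w f) * ‖w‖ :=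
      mul_le_mul_of_nonneg_right h1 (norm_nonneg w)
    have h4 : Real.sin θ * (Real.sin t * ‖w‖) ≤ Real.sin θ * (b * ‖e₁‖) := by
      apply mul_le_mul_of_nonneg_left _ hsinθ.le
      linarith
    calc Real.sin s * ‖w‖ ≤ Real.sin θ * Real.sin t * ‖w‖ :=
          mul_le_mul_of_nonneg_right h2 (norm_nonneg w)
      _ ≤ Real.sin θ * (b * ‖e₁‖) := by nlinarith [h4]
      _ = b * (Real.sin θ * ‖e₁‖) := by ring
      _ ≤ b * ‖m‖ := mul_le_mul_of_nonneg_left hm_norm hb.le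
  by_cases hcase1 : t < δ₁
  · exact case2 u v hu0 hv0 hun hvn
      (chain u e₂ he₂ hu0 (sin_delta_bound he₂ hb hu_def hu0) hcase1 hδ₁_le)
  by_cases hcase2 : t < δ₂
  · rw [InnerProductGeometry.angle_comm]
    exact case2 v u hv0 hu0 hvn hun
      (chain v e₃ he₃ hv0 (sin_delta_bound he₃ hb hv_def hv0) hcase2 hδ₂_le)
  -- both boundary angles small: use the angle triangle inequality
  push_neg at hcase1 hcase2
  have tri1 : InnerProductGeometry.angle u v ≤ δ₁ + InnerProductGeometry.angle e₂ v :=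
    my_angle_triangle u v he₂
  have tri2 : InnerProductGeometry.angle e₂ v ≤ InnerProductGeometry.angle e₂ e₃ + δ₂ := by
    have h := my_angle_triangle e₂ v he₃
    rwa [InnerProductGeometry.angle_comm e₃ v] at h
  have : InnerProductGeometry.angle u v ≤ t + (π - θ) + t := by linarith
  simp only [ht_def] at this
  linarith

/-- Analytic consequences of the defining equation for `φ₀`. -/
lemma phi_facts {θ φ₀ : ℝ} (hθ0 : 0 < θ) (hθ1 : θ < π / 2)
    (hφ₁ : π / 2 < φ₀) (hφ₂ : φ₀ < π)
    (heq : 4 * Real.sin φ₀ / Real.sin θ + 2 * π - 2 * φ₀ = θ) :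
    0 < π - φ₀ ∧ 2 * (π - φ₀) < θ ∧
      Real.sin (π - φ₀) ≤ Real.sin θ * Real.sin ((θ - (π - φ₀)) / 2) := by
  have pi_pos := Real.pi_pos
  set s := π - φ₀ with hs_def
  have hs0 : 0 < s := by simp only [hs_def]; linarith
  have hsφ : Real.sin φ₀ = Real.sin s := by
    rw [hs_def, Real.sin_pi_sub]
  have hq : 0 < Real.sin θ := Real.sin_pos_of_pos_of_lt_pi hθ0 (by linarith)
  have heq' : 4 * Real.sin s = Real.sin θ * (θ - 2 * s) := by
    have h1 : 4 * Real.sin φ₀ / Real.sin θ = θ - 2 * s := by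
      simp only [hs_def]; linarith
    rw [← hsφ]
    field_simp at h1
    linarith
  have hsin_s : 0 < Real.sin s := Real.sin_pos_of_pos_of_lt_pi hs0 (by linarith)
  have hsθ : 2 * s < θ := by nlinarith
  refine ⟨hs0, hsθ, ?_⟩
  have h2 : Real.sin s = Real.sin θ * (θ - 2 * s) / 4 := by
    rw [eq_div_iff (by norm_num : (4 : ℝ) ≠ 0)]
    linarith
  have pi_le_four := Real.pi_le_four
  have two_le_pi : (2 : ℝ) ≤ π := by linarith [Real.pi_gt_three]
  have step1 : (θ - 2 * s) / 4 ≤ (θ - s) / π := by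
    rw [div_le_div_iff₀ (by norm_num) pi_pos]
    nlinarith
  have step2 : (θ - s) / π ≤ Real.sin ((θ - s) / 2) := by
    have h := Real.mul_le_sin (x := (θ - s) / 2) (by linarith) (by linarith)
    calc (θ - s) / π = 2 / π * ((θ - s) / 2) := by field_simp
      _ ≤ Real.sin ((θ - s) / 2) := h
  calc Real.sin s = Real.sin θ * ((θ - 2 * s) / 4) := by rw [h2]; ring
    _ ≤ Real.sin θ * Real.sin ((θ - s) / 2) := by
        apply mul_le_mul_of_nonneg_left _ hq.le
        linarith

theorem max_angle_triangular_cross_section (θ : ℝ) (hθ : θ ∈ Set.Ioo 0 (π / 2))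
    (x : Fin 4 → EuclideanSpace ℝ (Fin 3))
    (hx : AffineIndependent ℝ x)
    (hface : ∀ i j k : Fin 4, i ≠ j → j ≠ k → i ≠ k →
      ∠ (x i) (x j) (x k) ∈ Set.Icc θ (π - θ))
    (hdist : ∀ i j : Fin 4, i ≠ j →
      Real.sin θ * dist (x i) (x j) ≤
        Metric.infDist (x i)
          (affineSpan ℝ (x '' ({i}ᶜ : Set (Fin 4))) : Set (EuclideanSpace ℝ (Fin 3))))
    (B C D : EuclideanSpace ℝ (Fin 3))
    (hB : B ∈ openSegment ℝ (x 0) (x 1))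
    (hC : C ∈ openSegment ℝ (x 0) (x 2))
    (hD : D ∈ openSegment ℝ (x 0) (x 3)) :
    ∀ φ₀ ∈ Set.Ioo (π / 2) π,
      4 * Real.sin φ₀ / Real.sin θ + 2 * π - 2 * φ₀ = θ →
      ∠ C B D ≤ φ₀ ∧ ∠ B C D ≤ φ₀ ∧ ∠ B D C ≤ φ₀ := by
  obtain ⟨hθ0, hθ1⟩ := hθ
  intro φ₀ hφ heq
  obtain ⟨hφ₁, hφ₂⟩ := hφ
  obtain ⟨hs0, hsθ, hkey⟩ := phi_facts hθ0 hθ1 hφ₁ hφ₂ heq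
  set s := π - φ₀ with hs_def
  -- extract the segment parameters
  rw [openSegment_eq_image'] at hB hC hD
  obtain ⟨b, hb_mem, hB_eq⟩ := hB
  obtain ⟨c, hc_mem, hC_eq⟩ := hC
  obtain ⟨d, hd_mem, hD_eq⟩ := hD
  set e₁ := x 1 - x 0 with he₁_def
  set e₂ := x 2 - x 0 with he₂_def
  set e₃ := x 3 - x 0 with he₃_def
  have hinj := hx.injective
  have hne : ∀ i j : Fin 4, i ≠ j → x i ≠ x j := fun i j h => fun he => h (hinj he)
  have he₁ : e₁ ≠ 0 := sub_ne_zero.2 (hne 1 0 (by decide))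
  have he₂ : e₂ ≠ 0 := sub_ne_zero.2 (hne 2 0 (by decide))
  have he₃ : e₃ ≠ 0 := sub_ne_zero.2 (hne 3 0 (by decide))
  -- face angles at the vertex x 0, as vector angles
  have hang : ∀ i j : Fin 4, i ≠ 0 → j ≠ 0 → i ≠ j →
      InnerProductGeometry.angle (x i - x 0) (x j - x 0) ∈ Set.Icc θ (π - θ) := by
    intro i j hi hj hij
    have h := hface i 0 j hi (Ne.symm hj) hij
    exact h
  -- distance hypothesis in vector form
  have hplane : ∀ i j k : Fin 4, i ≠ 0 → j ≠ 0 → k ≠ 0 → j ≠ i → k ≠ i →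
      ∀ w ∈ Submodule.span ℝ ({x j - x 0, x k - x 0} :
          Set (EuclideanSpace ℝ (Fin 3))),
      Real.sin θ * ‖x i - x 0‖ ≤ ‖(x i - x 0) - w‖ := by
    intro i j k hi hj hk hji hki w hw
    set S := affineSpan ℝ (x '' ({i}ᶜ : Set (Fin 4)))
    have hmemS : ∀ l : Fin 4, l ≠ i → x l ∈ S := by
      intro l hl
      exact subset_affineSpan ℝ _ ⟨l, by simpa using hl, rfl⟩
    have h0S : x 0 ∈ S := hmemS 0 (Ne.symm hi)
    have hdir : w ∈ S.direction := by
      refine Submodule.span_le.2 ?_ hw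
      rintro y (rfl | rfl)
      · have := AffineSubspace.vsub_mem_direction (hmemS j hji) h0S
        rwa [vsub_eq_sub] at this
      · have := AffineSubspace.vsub_mem_direction (hmemS k hki) h0S
        rwa [vsub_eq_sub] at this
    have hmem : w +ᵥ x 0 ∈ S := AffineSubspace.vadd_mem_of_mem_direction hdir h0S
    calc Real.sin θ * ‖x i - x 0‖ = Real.sin θ * dist (x i) (x 0) := by rw [dist_eq_norm]
      _ ≤ Metric.infDist (x i) S := hdist i 0 hi
      _ ≤ dist (x i) (w +ᵥ x 0) := Metric.infDist_le_dist_of_mem hmem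
      _ = ‖(x i - x 0) - w‖ := by
          rw [dist_eq_norm]
          congr 1
          rw [vadd_eq_add]
          abel
  have hb := hb_mem.1
  have hc := hc_mem.1
  have hd := hd_mem.1
  refine ⟨?_, ?_, ?_⟩
  · -- angle at B
    have h := vertex_bound hθ0 hθ1 hs0 (by linarith) hkey he₁ he₂ he₃
      (hang 2 3 (by decide) (by decide) (by decide)).2
      (hang 2 1 (by decide) (by decide) (by decide)).1
      (hang 3 1 (by decide) (by decide) (by decide)).1
      (hplane 1 2 3 (by decide) (by decide) (by decide) (by decide) (by decide))
      hb hc hd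
    have hCB : C - B = c • e₂ - b • e₁ := by
      rw [← hC_eq, ← hB_eq]; simp only; abel
    have hDB : D - B = d • e₃ - b • e₁ := by
      rw [← hD_eq, ← hB_eq]; simp only; abel
    have : ∠ C B D = InnerProductGeometry.angle (c • e₂ - b • e₁) (d • e₃ - b • e₁) := by
      show InnerProductGeometry.angle (C -ᵥ B) (D -ᵥ B) = _
      rw [vsub_eq_sub, vsub_eq_sub, hCB, hDB]
    rw [this]
    linarith
  · -- angle at C
    have h := vertex_bound hθ0 hθ1 hs0 (by linarith) hkey he₂ he₁ he₃
      (hang 1 3 (by decide) (by decide) (by decide)).2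
      (hang 1 2 (by decide) (by decide) (by decide)).1
      (hang 3 2 (by decide) (by decide) (by decide)).1
      (hplane 2 1 3 (by decide) (by decide) (by decide) (by decide) (by decide))
      hc hb hd
    have hBC : B - C = b • e₁ - c • e₂ := by
      rw [← hC_eq, ← hB_eq]; simp only; abel
    have hDC : D - C = d • e₃ - c • e₂ := by
      rw [← hD_eq, ← hC_eq]; simp only; abel
    have : ∠ B C D = InnerProductGeometry.angle (b • e₁ - c • e₂) (d • e₃ - c • e₂) := by
      show InnerProductGeometry.angle (B -ᵥ C) (D -ᵥ C) = _
      rw [vsub_eq_sub, vsub_eq_sub, hBC, hDC]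
    rw [this]
    linarith
  · -- angle at D
    have h := vertex_bound hθ0 hθ1 hs0 (by linarith) hkey he₃ he₁ he₂
      (hang 1 2 (by decide) (by decide) (by decide)).2
      (hang 1 3 (by decide) (by decide) (by decide)).1
      (hang 2 3 (by decide) (by decide) (by decide)).1
      (hplane 3 1 2 (by decide) (by decide) (by decide) (by decide) (by decide))
      hd hb hc
    have hBD : B - D = b • e₁ - d • e₃ := by
      rw [← hD_eq, ← hB_eq]; simp only; abel
    have hCD : C - D = c • e₂ - d • e₃ := by
      rw [← hD_eq, ← hC_eq]; simp only; abel
    have : ∠ B D C = InnerProductGeometry.angle (b • e₁ - d • e₃) (c • e₂ - d • e₃) := by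
      show InnerProductGeometry.angle (B -ᵥ D) (C -ᵥ D) = _
      rw [vsub_eq_sub, vsub_eq_sub, hBD, hCD]
    rw [this]
    linarith
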